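/- Let M be an n×m complex matrix of the form M = ∑_{j∈ℕ} g_j · (u_j v_jᴴ), where the g_j ∈ ℂ satisfy ∑_j |g_j| < ∞, the vectors u_j ∈ ℂⁿ and v_j ∈ ℂᵐ are unit vectors for the Euclidean norm, and u_j v_jᴴ is the rank-one matrix with entries (u_j)_a · conj((v_j)_b). Then ∑_{i} √(μ_i) ≤ ∑_{j∈ℕ} |g_j|, where (μ_i)_{i} are the (nonnegative) eigenvalues of the Hermitian positive-semidefinite matrix MᴴM; that is, the sum of the singular values of M is at most ∑_j |g_j|. -/

import Mathlib

open Matrix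

lemma aux_vecMulVec_mulVec {n m : ℕ} (u : Fin n → ℂ) (c y : Fin m → ℂ) :
    (Matrix.vecMulVec u c) *ᵥ y = (c ⬝ᵥ y) • u := by
  ext a
  simp [Matrix.mulVec, Matrix.vecMulVec_apply, dotProduct, Finset.mul_sum,
    Finset.sum_mul, mul_assoc, mul_comm, mul_left_comm]

noncomputable def auxPhi {n m : ℕ} (x : Fin n → ℂ) (y : Fin m → ℂ) :
    Matrix (Fin n) (Fin m) ℂ →ₗ[ℂ] ℂ where
  toFun A := dotProduct (star x) (A *ᵥ y)
  map_add' A B := by simp [Matrix.add_mulVec, dotProduct_add]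
  map_smul' c A := by simp [Matrix.smul_mulVec, dotProduct_smul]

lemma auxPhi_tsum {n m : ℕ} (x : Fin n → ℂ) (y : Fin m → ℂ)
    (T : ℕ → Matrix (Fin n) (Fin m) ℂ) (hT : Summable T) :
    dotProduct (star x) ((∑' j, T j) *ᵥ y)
      = ∑' j, dotProduct (star x) (T j *ᵥ y) := by
  have := ((auxPhi x y).toContinuousLinearMap).map_tsum hT
  simpa [auxPhi] using this

lemma aux_inner_equiv_symm {ι : Type*} [Fintype ι] (x y : ι → ℂ) :
    inner ℂ ((WithLp.equiv 2 (ι → ℂ)).symm x) ((WithLp.equiv 2 (ι → ℂ)).symm y)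
      = star x ⬝ᵥ y := by
  rw [dotProduct_comm]; rfl

theorem stmt_1 {n m : ℕ} (g : ℕ → ℂ) (hg : Summable fun j => ‖g j‖)
    (u : ℕ → Fin n → ℂ) (v : ℕ → Fin m → ℂ)
    (hu : ∀ j, ∑ a : Fin n, ‖u j a‖ ^ 2 = 1) (hv : ∀ j, ∑ b : Fin m, ‖v j b‖ ^ 2 = 1)
    (M : Matrix (Fin n) (Fin m) ℂ)
    (hM : M = ∑' j : ℕ, g j • Matrix.vecMulVec (u j) (fun b => (starRingEnd ℂ) (v j b))) :
    ∑ i : Fin m, Real.sqrt ((Matrix.isHermitian_conjTranspose_mul_self M).eigenvalues i)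
      ≤ ∑' j : ℕ, ‖g j‖ := by
  classical
  set h := Matrix.isHermitian_conjTranspose_mul_self M with hh
  set μ := h.eigenvalues with hμdef
  set w := h.eigenvectorBasis with hwdef
  have hμnn : ∀ i, 0 ≤ μ i :=
    fun i => Matrix.eigenvalues_conjTranspose_mul_self_nonneg M i
  -- entrywise bounds on u, v
  have hb : ∀ (k : ℕ) (f : Fin k → ℂ), (∑ a : Fin k, ‖f a‖ ^ 2 = 1) → ∀ a, ‖f a‖ ≤ 1 := by
    intro k f hf a
    have h1 : ‖f a‖ ^ 2 ≤ 1 := by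
      rw [← hf]
      exact Finset.single_le_sum (f := fun a => ‖f a‖ ^ 2)
        (fun b _ => by positivity) (Finset.mem_univ a)
    nlinarith [norm_nonneg (f a)]
  -- Euclidean space versions of vectors
  have hnormu : ∀ j, ‖(WithLp.equiv 2 (Fin n → ℂ)).symm (u j)‖ = 1 := by
    intro j; rw [EuclideanSpace.norm_eq]
    simp only [WithLp.equiv_symm_apply, WithLp.ofLp_toLp, hu j, Real.sqrt_one]
  have hnormv : ∀ j, ‖(WithLp.equiv 2 (Fin m → ℂ)).symm (v j)‖ = 1 := by
    intro j; rw [EuclideanSpace.norm_eq]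
    simp only [WithLp.equiv_symm_apply, WithLp.ofLp_toLp, hv j, Real.sqrt_one]
  -- the matrix family and its summability
  set T : ℕ → Matrix (Fin n) (Fin m) ℂ :=
    fun j => g j • Matrix.vecMulVec (u j) (fun b => (starRingEnd ℂ) (v j b)) with hTdef
  have hTsum : Summable T := by
    refine Pi.summable.mpr fun a => ?_; rw [Pi.summable]; intro b
    apply Summable.of_norm_bounded hg
    intro j
    simp only [hTdef, Matrix.smul_apply, Matrix.vecMulVec_apply, smul_eq_mul, norm_mul,
      RCLike.norm_conj]
    calc ‖g j‖ * (‖u j a‖ * ‖v j b‖) ≤ ‖g j‖ * (1 * 1) := by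
          gcongr
          · exact hb n (u j) (hu j) a
          · exact hb m (v j) (hv j) b
      _ = ‖g j‖ := by ring
  -- adjoint identity
  have hadj : ∀ y z : Fin m → ℂ,
      star (M *ᵥ y) ⬝ᵥ (M *ᵥ z) = star y ⬝ᵥ ((Mᴴ * M) *ᵥ z) := by
    intro y z
    rw [star_mulVec, ← Matrix.dotProduct_mulVec, ← Matrix.mulVec_mulVec]
  -- eigen relation on inner products
  have hwinner : ∀ i k : Fin m,
      star (M *ᵥ ⇑(w i)) ⬝ᵥ (M *ᵥ ⇑(w k)) = (μ k : ℂ) * (if i = k then 1 else 0) := by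
    intro i k
    rw [hadj, h.mulVec_eigenvectorBasis k, dotProduct_smul]
    have h3 : star (⇑(w i)) ⬝ᵥ (⇑(w k)) = (inner ℂ (w i) (w k) : ℂ) :=
      (aux_inner_equiv_symm ⇑(w i) ⇑(w k)).symm
    rw [h3, orthonormal_iff_ite.mp (h.eigenvectorBasis.orthonormal) i k]
    simp [Complex.real_smul, hμdef]
  -- the left singular vectors
  set x : Fin m → Fin n → ℂ :=
    fun i => (((Real.sqrt (μ i) : ℝ) : ℂ))⁻¹ • (M *ᵥ ⇑(w i)) with hxdef
  -- norm of M w i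
  have hMwnormsq : ∀ i, ‖(WithLp.equiv 2 (Fin n → ℂ)).symm (M *ᵥ ⇑(w i))‖ ^ 2 = μ i := by
    intro i
    have h4 : (inner ℂ ((WithLp.equiv 2 (Fin n → ℂ)).symm (M *ᵥ ⇑(w i)))
        ((WithLp.equiv 2 (Fin n → ℂ)).symm (M *ᵥ ⇑(w i))) : ℂ) = (μ i : ℂ) := by
      rw [aux_inner_equiv_symm, hwinner i i]; simp
    have h5 := @inner_self_eq_norm_sq ℂ _ _ _ _ ((WithLp.equiv 2 (Fin n → ℂ)).symm (M *ᵥ ⇑(w i)))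
    rw [h4] at h5
    exact_mod_cast h5.symm
  have hMwnorm : ∀ i, ‖(WithLp.equiv 2 (Fin n → ℂ)).symm (M *ᵥ ⇑(w i))‖ = Real.sqrt (μ i) := by
    intro i
    rw [← hMwnormsq i, Real.sqrt_sq (norm_nonneg _)]
  -- norm of x i is at most 1
  have hxnorm : ∀ i, ‖(WithLp.equiv 2 (Fin n → ℂ)).symm (x i)‖ ≤ 1 := by
    intro i
    have : (WithLp.equiv 2 (Fin n → ℂ)).symm (x i)
        = (((Real.sqrt (μ i) : ℝ) : ℂ))⁻¹ • (WithLp.equiv 2 (Fin n → ℂ)).symm (M *ᵥ ⇑(w i)) := rfl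
    rw [this, norm_smul, hMwnorm i]
    rcases eq_or_lt_of_le (Real.sqrt_nonneg (μ i)) with hs | hs
    · rw [← hs]; simp
    · rw [norm_inv, Complex.norm_real, Real.norm_of_nonneg (le_of_lt hs),
        inv_mul_cancel₀ (ne_of_gt hs)]
  -- the coefficients
  set a : ℕ → Fin m → ℂ := fun j i => star (x i) ⬝ᵥ u j with hadef
  set b : ℕ → Fin m → ℂ := fun j i => star (v j) ⬝ᵥ ⇑(w i) with hbdef
  have hanorm : ∀ j i, ‖a j i‖ ≤ 1 := by
    intro j i
    have := norm_inner_le_norm (𝕜 := ℂ) ((WithLp.equiv 2 (Fin n → ℂ)).symm (x i))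
      ((WithLp.equiv 2 (Fin n → ℂ)).symm (u j))
    rw [aux_inner_equiv_symm, hnormu j, mul_one] at this
    exact this.trans (hxnorm i)
  have hbnorm : ∀ j i, ‖b j i‖ ≤ 1 := by
    intro j i
    have := norm_inner_le_norm (𝕜 := ℂ) ((WithLp.equiv 2 (Fin m → ℂ)).symm (v j)) (w i)
    have h6 : (inner ℂ ((WithLp.equiv 2 (Fin m → ℂ)).symm (v j)) (w i) : ℂ) = b j i :=
      aux_inner_equiv_symm (v j) ⇑(w i)
    rw [h6, hnormv j, one_mul, w.orthonormal.1 i] at this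
    exact this
  -- key pointwise identity: sqrt (μ i) = ‖ tsum ‖
  have hkey : ∀ i : Fin m,
      Real.sqrt (μ i) = ‖∑' j, g j * b j i * a j i‖ := by
    intro i
    have hx1 : ∀ j, star (x i) ⬝ᵥ (T j *ᵥ ⇑(w i)) = g j * b j i * a j i := by
      intro j
      rw [hTdef]
      rw [Matrix.smul_mulVec, aux_vecMulVec_mulVec]
      simp only [dotProduct_smul, smul_eq_mul]
      have : ((fun b_1 => (starRingEnd ℂ) (v j b_1)) ⬝ᵥ ⇑(w i)) = b j i := rfl
      rw [this]
      ring
    have hx2 : star (x i) ⬝ᵥ (M *ᵥ ⇑(w i)) = ∑' j, g j * b j i * a j i := by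
      rw [hM]
      rw [auxPhi_tsum _ _ T hTsum]
      exact tsum_congr hx1
    have hx3 : star (x i) ⬝ᵥ (M *ᵥ ⇑(w i)) = ((Real.sqrt (μ i) : ℝ) : ℂ) := by
      have : star (x i) = (((Real.sqrt (μ i) : ℝ) : ℂ))⁻¹ • star (M *ᵥ ⇑(w i)) := by
        rw [hxdef]; simp [star_smul]
      rw [this, smul_dotProduct, hwinner i i, smul_eq_mul]
      simp only [if_pos rfl, mul_one]
      rcases eq_or_lt_of_le (hμnn i) with hz | hz
      · rw [← hz]; simp
      · have hsq : (Real.sqrt (μ i)) * (Real.sqrt (μ i)) = μ i := Real.mul_self_sqrt (hμnn i)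
        have hne : ((Real.sqrt (μ i) : ℝ) : ℂ) ≠ 0 :=
          Complex.ofReal_ne_zero.mpr (Real.sqrt_ne_zero'.mpr hz)
        field_simp
        norm_cast
        simp only [ite_true, Complex.ofReal_one, Nat.cast_one, mul_one]
        linarith [hsq]
    rw [← hx2, hx3, Complex.norm_real, Real.norm_of_nonneg (Real.sqrt_nonneg _)]
  -- x vanishes on null eigenvalues
  have hx0 : ∀ i, μ i = 0 → x i = 0 := by
    intro i hi
    rw [hxdef]
    simp [hi]
  -- inner products among the x's
  have hxin : ∀ i k : Fin m, star (x i) ⬝ᵥ (x k)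
      = (((Real.sqrt (μ i) : ℝ) : ℂ))⁻¹ * ((((Real.sqrt (μ k) : ℝ) : ℂ))⁻¹
        * ((μ k : ℂ) * if i = k then 1 else 0)) := by
    intro i k
    rw [hxdef]
    simp only [star_smul, smul_dotProduct, dotProduct_smul, hwinner i k,
      smul_eq_mul, star_inv₀, RCLike.star_def, Complex.conj_ofReal]
    ring
  -- orthonormality on the support
  have hON : Orthonormal ℂ
      (fun i : {i : Fin m // μ i ≠ 0} => (WithLp.equiv 2 (Fin n → ℂ)).symm (x i.1)) := by
    rw [orthonormal_iff_ite]
    rintro ⟨i, hi⟩ ⟨k, hk⟩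
    have h7 : (inner ℂ ((WithLp.equiv 2 (Fin n → ℂ)).symm (x i))
        ((WithLp.equiv 2 (Fin n → ℂ)).symm (x k)) : ℂ) = star (x i) ⬝ᵥ (x k) :=
      aux_inner_equiv_symm (x i) (x k)
    rw [h7, hxin i k]
    by_cases hik : i = k
    · subst hik
      simp only [if_pos rfl, Subtype.mk.injEq, mul_one]
      have hz : 0 < μ i := lt_of_le_of_ne (hμnn i) (Ne.symm hi)
      have hsq : (Real.sqrt (μ i)) * (Real.sqrt (μ i)) = μ i := Real.mul_self_sqrt (hμnn i)
      have hne : ((Real.sqrt (μ i) : ℝ) : ℂ) ≠ 0 :=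
        Complex.ofReal_ne_zero.mpr (Real.sqrt_ne_zero'.mpr hz)
      field_simp
      norm_cast
      linarith [hsq]
    · simp [hik, Subtype.mk.injEq]
  -- Bessel inequality for the a's
  have hBa : ∀ j, ∑ i : Fin m, ‖a j i‖ ^ 2 ≤ 1 := by
    intro j
    have ha0 : ∀ i : Fin m, μ i = 0 → ‖a j i‖ ^ 2 = 0 := by
      intro i hi
      rw [hadef]
      simp [hx0 i hi]
    have e1 : ∑ i ∈ Finset.univ.filter (fun i : Fin m => μ i ≠ 0), ‖a j i‖ ^ 2
        = ∑ i : Fin m, ‖a j i‖ ^ 2 := by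
      apply Finset.sum_filter_of_ne
      intro i _ hne hzero
      exact hne (ha0 i hzero)
    have e2 : ∑ i ∈ Finset.univ.filter (fun i : Fin m => μ i ≠ 0), ‖a j i‖ ^ 2
        = ∑ i : {i : Fin m // μ i ≠ 0}, ‖a j i.1‖ ^ 2 := by
      rw [← Finset.sum_subtype (Finset.univ.filter (fun i : Fin m => μ i ≠ 0))
        (fun i => by simp) (fun i => ‖a j i‖ ^ 2)]
    have hbessel := hON.sum_inner_products_le (s := Finset.univ)
      ((WithLp.equiv 2 (Fin n → ℂ)).symm (u j))
    rw [hnormu j, one_pow] at hbessel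
    have e3 : ∀ i : {i : Fin m // μ i ≠ 0},
        (inner ℂ ((WithLp.equiv 2 (Fin n → ℂ)).symm (x i.1))
          ((WithLp.equiv 2 (Fin n → ℂ)).symm (u j)) : ℂ) = a j i.1 := fun i =>
          aux_inner_equiv_symm (x i.1) (u j)
    calc ∑ i : Fin m, ‖a j i‖ ^ 2 = ∑ i : {i : Fin m // μ i ≠ 0}, ‖a j i.1‖ ^ 2 := by
          rw [← e1, e2]
      _ ≤ 1 := by
          refine le_trans (le_of_eq ?_) hbessel
          exact Finset.sum_congr rfl fun i _ => by rw [e3 i]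
  -- Bessel inequality for the b's
  have hBb : ∀ j, ∑ i : Fin m, ‖b j i‖ ^ 2 ≤ 1 := by
    intro j
    have hbessel := (w.orthonormal).sum_inner_products_le (s := Finset.univ)
      ((WithLp.equiv 2 (Fin m → ℂ)).symm (v j))
    rw [hnormv j, one_pow] at hbessel
    refine le_trans (le_of_eq ?_) hbessel
    refine Finset.sum_congr rfl fun i _ => ?_
    have e4 : (inner ℂ ((WithLp.equiv 2 (Fin m → ℂ)).symm (v j)) (w i) : ℂ) = b j i :=
      aux_inner_equiv_symm (v j) ⇑(w i)
    rw [← norm_inner_symm, e4]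
  -- per-j Cauchy-Schwarz bound
  have hCS : ∀ j, ∑ i : Fin m, ‖a j i‖ * ‖b j i‖ ≤ 1 := by
    intro j
    have cs := Finset.sum_mul_sq_le_sq_mul_sq Finset.univ (fun i => ‖a j i‖) (fun i => ‖b j i‖)
    have hnn : (0:ℝ) ≤ ∑ i : Fin m, ‖a j i‖ * ‖b j i‖ :=
      Finset.sum_nonneg fun i _ => mul_nonneg (norm_nonneg _) (norm_nonneg _)
    nlinarith [hBa j, hBb j, Finset.sum_nonneg (fun i (_ : i ∈ Finset.univ) =>
      (by positivity : (0:ℝ) ≤ ‖a j i‖ ^ 2)),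
      Finset.sum_nonneg (fun i (_ : i ∈ Finset.univ) => (by positivity : (0:ℝ) ≤ ‖b j i‖ ^ 2))]
  -- summability of norm families
  have hsumm : ∀ i : Fin m, Summable (fun j => ‖g j‖ * (‖a j i‖ * ‖b j i‖)) := by
    intro i
    apply Summable.of_nonneg_of_le (fun j => by positivity) _ hg
    intro j
    calc ‖g j‖ * (‖a j i‖ * ‖b j i‖) ≤ ‖g j‖ * (1 * 1) := by
          gcongr
          · exact hanorm j i
          · exact hbnorm j i
      _ = ‖g j‖ := by ring
  -- main chain
  calc ∑ i : Fin m, Real.sqrt (μ i)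
      = ∑ i : Fin m, ‖∑' j, g j * b j i * a j i‖ := Finset.sum_congr rfl fun i _ => hkey i
    _ ≤ ∑ i : Fin m, ∑' j, ‖g j‖ * (‖a j i‖ * ‖b j i‖) := by
        refine Finset.sum_le_sum fun i _ => ?_
        refine le_trans (norm_tsum_le_tsum_norm ?_) (le_of_eq (tsum_congr fun j => ?_))
        · refine Summable.of_nonneg_of_le (fun j => norm_nonneg _) (fun j => ?_) (hsumm i)
          rw [norm_mul, norm_mul]
          ring_nf
          exact le_of_eq (by ring)
        · rw [norm_mul, norm_mul]; ring
    _ = ∑' j, ∑ i : Fin m, ‖g j‖ * (‖a j i‖ * ‖b j i‖) :=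
        (Summable.tsum_finsetSum fun i _ => hsumm i).symm
    _ ≤ ∑' j, ‖g j‖ := by
        refine Summable.tsum_le_tsum (fun j => ?_) ?_ hg
        · rw [← Finset.mul_sum]
          calc ‖g j‖ * ∑ i : Fin m, ‖a j i‖ * ‖b j i‖ ≤ ‖g j‖ * 1 :=
              mul_le_mul_of_nonneg_left (hCS j) (norm_nonneg _)
            _ = ‖g j‖ := mul_one _
        · apply Summable.of_nonneg_of_le
            (fun j => Finset.sum_nonneg fun i _ => by positivity) _ hg
          intro j
          rw [← Finset.mul_sum]
          calc ‖g j‖ * ∑ i : Fin m, ‖a j i‖ * ‖b j i‖ ≤ ‖g j‖ * 1 :=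
              mul_le_mul_of_nonneg_left (hCS j) (norm_nonneg _)
            _ = ‖g j‖ := mul_one _
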